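/- Proposition 1: if S1 ⊆ [K] and S2 ⊆ [K] are both decodable sets, then S1 ∪ S2 is a decodable set. -/

import Mathlib

open scoped BigOperators
open Filter

set_option synthInstance.maxSize 4000
set_option synthInstance.maxHeartbeats 1000000
set_option maxHeartbeats 1000000

noncomputable section

/-- Shannon entropy (base 2) of a finitely supported distribution `p`. -/
def ent {α : Type*} [Fintype α] (p : α → ℝ) : ℝ := -∑ a, p a * Real.logb 2 (p a)

/-- The distribution (pushforward) of a random variable `f` on the finite
probability space `(Ω, p)`. -/
def distOf {Ω β : Type*} [Fintype Ω] [DecidableEq β] (p : Ω → ℝ) (f : Ω → β) : β → ℝ :=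
  fun b => ∑ ω, if f ω = b then p ω else 0

/-- The entropy `H(f)` of a random variable `f` on the finite probability space `(Ω, p)`. -/
def entOf {Ω β : Type*} [Fintype Ω] [Fintype β] [DecidableEq β] (p : Ω → ℝ) (f : Ω → β) : ℝ :=
  ent (distOf p f)

/-- The conditional entropy `H(f | g)`. -/
def condEnt {Ω β γ : Type*} [Fintype Ω] [Fintype β] [Fintype γ] [DecidableEq β] [DecidableEq γ]
    (p : Ω → ℝ) (f : Ω → β) (g : Ω → γ) : ℝ :=
  entOf p (fun ω => (f ω, g ω)) - entOf p g

/-- The mutual information `I(f; g)`. -/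
def mutInfo {Ω β γ : Type*} [Fintype Ω] [Fintype β] [Fintype γ] [DecidableEq β] [DecidableEq γ]
    (p : Ω → ℝ) (f : Ω → β) (g : Ω → γ) : ℝ :=
  entOf p f + entOf p g - entOf p (fun ω => (f ω, g ω))

/-- The conditional mutual information `I(f; g | h)`. -/
def condMutInfo {Ω β γ δ : Type*} [Fintype Ω] [Fintype β] [Fintype γ] [Fintype δ]
    [DecidableEq β] [DecidableEq γ] [DecidableEq δ]
    (p : Ω → ℝ) (f : Ω → β) (g : Ω → γ) (h : Ω → δ) : ℝ :=
  entOf p (fun ω => (f ω, h ω)) + entOf p (fun ω => (g ω, h ω)) -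
    entOf p (fun ω => (f ω, g ω, h ω)) - entOf p h

/-- `p` is a probability mass function on the finite alphabet `α`. -/
def IsPMF {α : Type*} [Fintype α] (p : α → ℝ) : Prop := (∀ a, 0 ≤ p a) ∧ ∑ a, p a = 1

section GeneralEntropyLemmas

set_option linter.unusedSectionVars false

variable {Ω β γ δ : Type*} [Fintype Ω] [Fintype β] [Fintype γ] [Fintype δ]
    [DecidableEq β] [DecidableEq γ] [DecidableEq δ]

theorem distOf_nonneg (p : Ω → ℝ) (hp : ∀ ω, 0 ≤ p ω) (f : Ω → β) (b : β) :
    0 ≤ distOf p f b := by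
  apply Finset.sum_nonneg; intro ω _; split <;> simp [hp ω]

/-- entropy invariance under injective recoding -/
theorem entOf_comp_inj (p : Ω → ℝ) (f : Ω → β) (e : β → γ) (he : Function.Injective e) :
    entOf p (fun ω => e (f ω)) = entOf p f := by
  have key : ∀ b, distOf p (fun ω => e (f ω)) (e b) = distOf p f b := by
    intro b; unfold distOf; apply Finset.sum_congr rfl; intro ω _
    simp [he.eq_iff]
  have key2 : ∀ c, c ∉ Set.range e → distOf p (fun ω => e (f ω)) c = 0 := by
    intro c hc; unfold distOf; apply Finset.sum_eq_zero; intro ω _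
    rw [if_neg]; exact fun h => hc ⟨f ω, h⟩
  unfold entOf ent
  congr 1
  set F := fun c => distOf p (fun ω => e (f ω)) c * Real.logb 2 (distOf p (fun ω => e (f ω)) c) with hF
  have h1 : ∑ a : γ, F a = ∑ a ∈ Finset.univ.image e, F a := by
    refine (Finset.sum_subset (Finset.subset_univ _) ?_).symm
    intro c _ hc
    have : c ∉ Set.range e := fun ⟨b, hb⟩ => hc (Finset.mem_image.mpr ⟨b, Finset.mem_univ _, hb⟩)
    simp [hF, key2 c this]
  rw [h1, Finset.sum_image (by intro x _ y _ h; exact he h)]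
  apply Finset.sum_congr rfl; intro b _
  simp [hF, key b]

set_option linter.unusedSectionVars false

section Triple
variable (p : Ω → ℝ) (f : Ω → β) (g : Ω → γ) (h : Ω → δ)

theorem marg1 (b : β) (d : δ) :
    distOf p (fun ω => (f ω, h ω)) (b, d)
      = ∑ c, distOf p (fun ω => (f ω, g ω, h ω)) (b, c, d) := by
  unfold distOf
  rw [Finset.sum_comm]
  apply Finset.sum_congr rfl; intro ω _
  rw [Finset.sum_eq_single (g ω)]
  · simp [Prod.ext_iff]
  · intro c _ hc; rw [if_neg]; simp [Prod.ext_iff]; tauto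
  · simp

theorem marg2 (c : γ) (d : δ) :
    distOf p (fun ω => (g ω, h ω)) (c, d)
      = ∑ b, distOf p (fun ω => (f ω, g ω, h ω)) (b, c, d) := by
  unfold distOf
  rw [Finset.sum_comm]
  apply Finset.sum_congr rfl; intro ω _
  rw [Finset.sum_eq_single (f ω)]
  · simp [Prod.ext_iff]
  · intro b _ hb; rw [if_neg]; simp [Prod.ext_iff]; tauto
  · simp

theorem marg3 (d : δ) :
    distOf p h d = ∑ b, ∑ c, distOf p (fun ω => (f ω, g ω, h ω)) (b, c, d) := by
  have : ∀ b, ∑ c, distOf p (fun ω => (f ω, g ω, h ω)) (b, c, d)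
      = distOf p (fun ω => (f ω, h ω)) (b, d) := fun b => (marg1 p f g h b d).symm
  simp only [this]
  unfold distOf
  rw [Finset.sum_comm]
  apply Finset.sum_congr rfl; intro ω _
  rw [Finset.sum_eq_single (f ω)]
  · simp [Prod.ext_iff]
  · intro b _ hb; rw [if_neg]; simp [Prod.ext_iff]; tauto
  · simp

theorem sum3 (F : β × γ × δ → ℝ) : ∑ x : β × γ × δ, F x = ∑ b, ∑ c, ∑ d, F (b, c, d) := by
  rw [Fintype.sum_prod_type]
  apply Finset.sum_congr rfl; intro b _
  rw [Fintype.sum_prod_type]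

theorem sum3' (F : β × γ × δ → ℝ) : ∑ x : β × γ × δ, F x = ∑ d, ∑ b, ∑ c, F (b, c, d) := by
  rw [sum3]
  have hbd : ∀ b : β, ∑ c : γ, ∑ d : δ, F (b, c, d) = ∑ d : δ, ∑ c : γ, F (b, c, d) :=
    fun b => Finset.sum_comm
  simp only [hbd]
  exact Finset.sum_comm

theorem condMutInfo_eq_sum :
    condMutInfo p f g h = ∑ x : β × γ × δ,
      distOf p (fun ω => (f ω, g ω, h ω)) x *
        (Real.logb 2 (distOf p (fun ω => (f ω, g ω, h ω)) x)
         + Real.logb 2 (distOf p h x.2.2)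
         - Real.logb 2 (distOf p (fun ω => (f ω, h ω)) (x.1, x.2.2))
         - Real.logb 2 (distOf p (fun ω => (g ω, h ω)) (x.2.1, x.2.2))) := by
  set r := distOf p (fun ω => (f ω, g ω, h ω)) with hr
  have e1 : entOf p (fun ω => (f ω, h ω))
      = -∑ x : β × γ × δ, r x * Real.logb 2 (distOf p (fun ω => (f ω, h ω)) (x.1, x.2.2)) := by
    unfold entOf ent
    congr 1
    rw [sum3]
    rw [Fintype.sum_prod_type]
    apply Finset.sum_congr rfl; intro b _
    conv_rhs => rw [Finset.sum_comm]
    apply Finset.sum_congr rfl; intro d _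
    dsimp only
    conv_rhs => rw [← Finset.sum_mul]
    rw [← marg1 p f g h b d]
  have e2 : entOf p (fun ω => (g ω, h ω))
      = -∑ x : β × γ × δ, r x * Real.logb 2 (distOf p (fun ω => (g ω, h ω)) (x.2.1, x.2.2)) := by
    unfold entOf ent
    congr 1
    rw [sum3]
    conv_rhs => rw [Finset.sum_comm]
    rw [Fintype.sum_prod_type]
    apply Finset.sum_congr rfl; intro c _
    conv_rhs => rw [Finset.sum_comm]
    apply Finset.sum_congr rfl; intro d _
    dsimp only
    conv_rhs => rw [← Finset.sum_mul]
    rw [← marg2 p f g h c d]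
  have e3 : entOf p h = -∑ x : β × γ × δ, r x * Real.logb 2 (distOf p h x.2.2) := by
    unfold entOf ent
    congr 1
    rw [sum3']
    apply Finset.sum_congr rfl; intro d _
    dsimp only
    simp only [← Finset.sum_mul]
    rw [← marg3 p f g h d]
  have e4 : entOf p (fun ω => (f ω, g ω, h ω)) = -∑ x : β × γ × δ, r x * Real.logb 2 (r x) := rfl
  unfold condMutInfo
  rw [e1, e2, e3, e4]
  simp only [mul_add, mul_sub]
  rw [Finset.sum_sub_distrib, Finset.sum_sub_distrib, Finset.sum_add_distrib]
  ring


theorem r_le_marg1 (hp : ∀ ω, 0 ≤ p ω) (x : β × γ × δ) :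
    distOf p (fun ω => (f ω, g ω, h ω)) x ≤ distOf p (fun ω => (f ω, h ω)) (x.1, x.2.2) := by
  obtain ⟨b, c, d⟩ := x
  rw [marg1 p f g h b d]
  exact Finset.single_le_sum (f := fun c => distOf p (fun ω => (f ω, g ω, h ω)) (b, c, d))
    (fun c _ => distOf_nonneg p hp _ _) (Finset.mem_univ c)

theorem r_le_marg2 (hp : ∀ ω, 0 ≤ p ω) (x : β × γ × δ) :
    distOf p (fun ω => (f ω, g ω, h ω)) x ≤ distOf p (fun ω => (g ω, h ω)) (x.2.1, x.2.2) := by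
  obtain ⟨b, c, d⟩ := x
  rw [marg2 p f g h c d]
  exact Finset.single_le_sum (f := fun b => distOf p (fun ω => (f ω, g ω, h ω)) (b, c, d))
    (fun b _ => distOf_nonneg p hp _ _) (Finset.mem_univ b)

theorem r_le_marg3 (hp : ∀ ω, 0 ≤ p ω) (x : β × γ × δ) :
    distOf p (fun ω => (f ω, g ω, h ω)) x ≤ distOf p h x.2.2 := by
  obtain ⟨b, c, d⟩ := x
  rw [marg3 p f g h d]
  calc distOf p (fun ω => (f ω, g ω, h ω)) (b, c, d)
      ≤ ∑ c, distOf p (fun ω => (f ω, g ω, h ω)) (b, c, d) :=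
        Finset.single_le_sum (f := fun c => distOf p (fun ω => (f ω, g ω, h ω)) (b, c, d))
          (fun c _ => distOf_nonneg p hp _ _) (Finset.mem_univ c)
    _ ≤ ∑ b, ∑ c, distOf p (fun ω => (f ω, g ω, h ω)) (b, c, d) :=
        Finset.single_le_sum (f := fun b => ∑ c, distOf p (fun ω => (f ω, g ω, h ω)) (b, c, d))
          (fun b _ => Finset.sum_nonneg fun c _ => distOf_nonneg p hp _ _) (Finset.mem_univ b)

/-- Conditional independence in distribution implies vanishing CMI. -/
theorem condMutInfo_eq_zero_of_indep (hp : ∀ ω, 0 ≤ p ω)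
    (hfact : ∀ b c d, distOf p (fun ω => (f ω, g ω, h ω)) (b, c, d) * distOf p h d
      = distOf p (fun ω => (f ω, h ω)) (b, d) * distOf p (fun ω => (g ω, h ω)) (c, d)) :
    condMutInfo p f g h = 0 := by
  rw [condMutInfo_eq_sum]
  apply Finset.sum_eq_zero
  intro x _
  rcases eq_or_lt_of_le (distOf_nonneg p hp (fun ω => (f ω, g ω, h ω)) x) with h0 | h0
  · rw [← h0, zero_mul]
  · have hm1 : 0 < distOf p (fun ω => (f ω, h ω)) (x.1, x.2.2) :=
      lt_of_lt_of_le h0 (r_le_marg1 p f g h hp x)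
    have hm2 : 0 < distOf p (fun ω => (g ω, h ω)) (x.2.1, x.2.2) :=
      lt_of_lt_of_le h0 (r_le_marg2 p f g h hp x)
    have hm3 : 0 < distOf p h x.2.2 := lt_of_lt_of_le h0 (r_le_marg3 p f g h hp x)
    obtain ⟨b, c, d⟩ := x
    have : Real.logb 2 (distOf p (fun ω => (f ω, g ω, h ω)) (b, c, d))
        + Real.logb 2 (distOf p h d)
        = Real.logb 2 (distOf p (fun ω => (f ω, h ω)) (b, d))
          + Real.logb 2 (distOf p (fun ω => (g ω, h ω)) (c, d)) := by
      rw [← Real.logb_mul (ne_of_gt h0) (ne_of_gt hm3),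
          ← Real.logb_mul (ne_of_gt hm1) (ne_of_gt hm2), hfact b c d]
    simp only at this ⊢
    rw [this]
    ring

/-- Nonnegativity of conditional mutual information. -/
theorem condMutInfo_nonneg (hp : ∀ ω, 0 ≤ p ω) : 0 ≤ condMutInfo p f g h := by
  classical
  set r := distOf p (fun ω => (f ω, g ω, h ω)) with hrdef
  set m1 := distOf p (fun ω => (f ω, h ω)) with hm1def
  set m2 := distOf p (fun ω => (g ω, h ω)) with hm2def
  set m3 := distOf p h with hm3def
  have hc : (0:ℝ) < Real.log 2 := Real.log_pos (by norm_num)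
  set G : β × γ × δ → ℝ := fun x =>
    if 0 < m3 x.2.2 then m1 (x.1, x.2.2) * m2 (x.2.1, x.2.2) / m3 x.2.2 else 0 with hGdef
  have hrnn : ∀ x, 0 ≤ r x := fun x => distOf_nonneg p hp _ _
  have hGnn : ∀ x, 0 ≤ G x := by
    intro x
    rw [hGdef]
    dsimp only
    split
    · apply div_nonneg (mul_nonneg (distOf_nonneg p hp _ _) (distOf_nonneg p hp _ _)) (le_of_lt (by assumption))
    · exact le_refl 0
  have key : ∀ x : β × γ × δ, (r x - G x) / Real.log 2 ≤
      r x * (Real.logb 2 (r x) + Real.logb 2 (m3 x.2.2)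
        - Real.logb 2 (m1 (x.1, x.2.2)) - Real.logb 2 (m2 (x.2.1, x.2.2))) := by
    intro x
    rcases eq_or_lt_of_le (hrnn x) with h0 | h0
    · rw [← h0, zero_mul, zero_sub]
      apply div_nonpos_of_nonpos_of_nonneg (neg_nonpos_of_nonneg (hGnn x)) (le_of_lt hc)
    · have hm1 : 0 < m1 (x.1, x.2.2) := lt_of_lt_of_le h0 (r_le_marg1 p f g h hp x)
      have hm2 : 0 < m2 (x.2.1, x.2.2) := lt_of_lt_of_le h0 (r_le_marg2 p f g h hp x)
      have hm3 : 0 < m3 x.2.2 := lt_of_lt_of_le h0 (r_le_marg3 p f g h hp x)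
      have hG : G x = m1 (x.1, x.2.2) * m2 (x.2.1, x.2.2) / m3 x.2.2 := by
        rw [hGdef]; exact if_pos hm3
      set y : ℝ := r x * m3 x.2.2 / (m1 (x.1, x.2.2) * m2 (x.2.1, x.2.2)) with hy
      have hypos : 0 < y := by positivity
      have hlog : Real.logb 2 (r x) + Real.logb 2 (m3 x.2.2)
          - Real.logb 2 (m1 (x.1, x.2.2)) - Real.logb 2 (m2 (x.2.1, x.2.2))
          = Real.log y / Real.log 2 := by
        rw [hy, Real.log_div (by positivity) (by positivity),
          Real.log_mul (ne_of_gt h0) (ne_of_gt hm3),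
          Real.log_mul (ne_of_gt hm1) (ne_of_gt hm2)]
        unfold Real.logb
        ring
      rw [hlog]
      have habc : r x * (Real.log y / Real.log 2) = (Real.log y * r x) / Real.log 2 := by ring
      rw [habc, div_le_div_iff_of_pos_right hc]
      have hlogy : 1 - 1 / y ≤ Real.log y := by
        have := Real.log_le_sub_one_of_pos (show (0:ℝ) < 1 / y by positivity)
        rw [Real.log_div one_ne_zero (ne_of_gt hypos), Real.log_one] at this
        linarith
      have h1 : r x - G x ≤ r x * (1 - 1 / y) := by
        have : r x * (1 - 1 / y) = r x - G x := by
          rw [hG, hy]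
          field_simp
        linarith [this]
      calc r x - G x ≤ r x * (1 - 1 / y) := h1
        _ ≤ r x * Real.log y := by
            apply mul_le_mul_of_nonneg_left hlogy (le_of_lt h0)
        _ = Real.log y * r x := mul_comm _ _
  have hsum : ∑ x : β × γ × δ, G x ≤ ∑ x : β × γ × δ, r x := by
    rw [sum3' G, sum3' r]
    apply Finset.sum_le_sum
    intro d _
    by_cases hd : 0 < m3 d
    · have hGd : ∀ b c, G (b, c, d) = m1 (b, d) * m2 (c, d) / m3 d := by
        intro b c; rw [hGdef]; exact if_pos hd
      have hb : ∑ b, m1 (b, d) = m3 d := by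
        rw [hm3def, marg3 p f g h d]
        apply Finset.sum_congr rfl; intro b _
        rw [hm1def, marg1 p f g h b d]
      have hcsum : ∑ c, m2 (c, d) = m3 d := by
        rw [hm3def, marg3 p f g h d, Finset.sum_comm]
        apply Finset.sum_congr rfl; intro c _
        rw [hm2def, marg2 p f g h c d]
      refine le_of_eq ?_
      calc ∑ b, ∑ c, G (b, c, d) = ∑ b, ∑ c, m1 (b, d) * m2 (c, d) / m3 d := by
            simp only [hGd]
        _ = (∑ b, m1 (b, d)) * (∑ c, m2 (c, d)) / m3 d := by
            rw [Finset.sum_mul_sum, Finset.sum_div]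
            apply Finset.sum_congr rfl; intro b _
            rw [Finset.sum_div]
        _ = m3 d := by rw [hb, hcsum]; field_simp
        _ = ∑ b, ∑ c, r (b, c, d) := marg3 p f g h d
    · have hGd : ∀ b c, G (b, c, d) = 0 := by
        intro b c; rw [hGdef]; exact if_neg hd
      simp only [hGd, Finset.sum_const_zero]
      exact Finset.sum_nonneg fun b _ => Finset.sum_nonneg fun c _ => hrnn (b, c, d)
  rw [condMutInfo_eq_sum]
  calc (0:ℝ) = (∑ x : β × γ × δ, r x - ∑ x : β × γ × δ, r x) / Real.log 2 := by ring
    _ ≤ (∑ x : β × γ × δ, r x - ∑ x : β × γ × δ, G x) / Real.log 2 := by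
        exact (div_le_div_iff_of_pos_right hc).mpr (sub_le_sub_left hsum _)
    _ = ∑ x : β × γ × δ, (r x - G x) / Real.log 2 := by
        rw [← Finset.sum_sub_distrib, Finset.sum_div]
    _ ≤ ∑ x : β × γ × δ, r x * (Real.logb 2 (r x) + Real.logb 2 (m3 x.2.2)
        - Real.logb 2 (m1 (x.1, x.2.2)) - Real.logb 2 (m2 (x.2.1, x.2.2))) :=
        Finset.sum_le_sum fun x _ => key x

end Triple

section Recode
variable {Ω β γ δ β' δ' ε : Type*} [Fintype Ω] [Fintype β] [Fintype γ] [Fintype δ]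
    [Fintype β'] [Fintype δ'] [Fintype ε]
    [DecidableEq β] [DecidableEq γ] [DecidableEq δ] [DecidableEq β'] [DecidableEq δ']
    [DecidableEq ε]

theorem distOf_comp_point {Ω β γ : Type*} [Fintype Ω] [DecidableEq β] [DecidableEq γ]
    (p : Ω → ℝ) (f : Ω → β) (f' : Ω → γ) (e : β → γ) (he : Function.Injective e)
    (hcomp : ∀ ω, f' ω = e (f ω)) (b : β) :
    distOf p f' (e b) = distOf p f b := by
  unfold distOf
  apply Finset.sum_congr rfl; intro ω _
  rw [hcomp ω]
  simp [he.eq_iff]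

theorem entOf_eq_of_inj (p : Ω → ℝ) (F : Ω → β) (F' : Ω → γ) (e : β → γ)
    (he : Function.Injective e) (hcomp : ∀ ω, F' ω = e (F ω)) : entOf p F' = entOf p F := by
  have : F' = fun ω => e (F ω) := funext hcomp
  rw [this]
  exact entOf_comp_inj p F e he

theorem condMutInfo_first_recode (p : Ω → ℝ) (f : Ω → β) (f' : Ω → β') (g : Ω → γ) (h : Ω → δ)
    (e : β → β') (he : Function.Injective e) (hcomp : ∀ ω, f' ω = e (f ω)) :
    condMutInfo p f' g h = condMutInfo p f g h := by
  unfold condMutInfo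
  rw [entOf_eq_of_inj p (fun ω => (f ω, h ω)) (fun ω => (f' ω, h ω))
      (Prod.map e id) (he.prodMap Function.injective_id) (fun ω => by simp [hcomp ω]),
    entOf_eq_of_inj p (fun ω => (f ω, g ω, h ω)) (fun ω => (f' ω, g ω, h ω))
      (Prod.map e id) (he.prodMap Function.injective_id) (fun ω => by simp [hcomp ω])]

theorem condMutInfo_third_recode (p : Ω → ℝ) (f : Ω → β) (g : Ω → γ) (h : Ω → δ) (h' : Ω → δ')
    (e : δ → δ') (he : Function.Injective e) (hcomp : ∀ ω, h' ω = e (h ω)) :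
    condMutInfo p f g h' = condMutInfo p f g h := by
  unfold condMutInfo
  rw [entOf_eq_of_inj p (fun ω => (f ω, h ω)) (fun ω => (f ω, h' ω))
      (Prod.map id e) (Function.injective_id.prodMap he) (fun ω => by simp [hcomp ω]),
    entOf_eq_of_inj p (fun ω => (g ω, h ω)) (fun ω => (g ω, h' ω))
      (Prod.map id e) (Function.injective_id.prodMap he) (fun ω => by simp [hcomp ω]),
    entOf_eq_of_inj p (fun ω => (f ω, g ω, h ω)) (fun ω => (f ω, g ω, h' ω))
      (Prod.map id (Prod.map id e))
      (Function.injective_id.prodMap (Function.injective_id.prodMap he))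
      (fun ω => by simp [hcomp ω]),
    entOf_eq_of_inj p h h' e he hcomp]

theorem condMutInfo_symm (p : Ω → ℝ) (f : Ω → β) (g : Ω → γ) (h : Ω → δ) :
    condMutInfo p f g h = condMutInfo p g f h := by
  unfold condMutInfo
  rw [entOf_eq_of_inj p (fun ω => (g ω, f ω, h ω)) (fun ω => (f ω, g ω, h ω))
      (fun x => (x.2.1, x.1, x.2.2)) (fun a b hab => by
        simp only [Prod.ext_iff] at hab ⊢; tauto) (fun ω => rfl)]
  ring

theorem condMutInfo_chain (p : Ω → ℝ) (f : Ω → β) (g : Ω → γ) (Y : Ω → ε) (h : Ω → δ) :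
    condMutInfo p (fun ω => (f ω, g ω)) Y h
      = condMutInfo p f Y h + condMutInfo p g Y (fun ω => (f ω, h ω)) := by
  unfold condMutInfo
  have A1 : entOf p (fun ω => ((f ω, g ω), h ω)) = entOf p (fun ω => (f ω, g ω, h ω)) :=
    entOf_eq_of_inj p _ _ (fun x : β × γ × δ => ((x.1, x.2.1), x.2.2))
      (fun a b hab => by simp only [Prod.ext_iff] at hab ⊢; tauto) (fun ω => rfl)
  have A2 : entOf p (fun ω => (g ω, f ω, h ω)) = entOf p (fun ω => (f ω, g ω, h ω)) :=
    entOf_eq_of_inj p _ _ (fun x : β × γ × δ => (x.2.1, x.1, x.2.2))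
      (fun a b hab => by simp only [Prod.ext_iff] at hab ⊢; tauto) (fun ω => rfl)
  have A3 : entOf p (fun ω => (Y ω, f ω, h ω)) = entOf p (fun ω => (f ω, Y ω, h ω)) :=
    entOf_eq_of_inj p _ _ (fun x : β × ε × δ => (x.2.1, x.1, x.2.2))
      (fun a b hab => by simp only [Prod.ext_iff] at hab ⊢; tauto) (fun ω => rfl)
  have A4 : entOf p (fun ω => ((f ω, g ω), Y ω, h ω))
      = entOf p (fun ω => (f ω, g ω, Y ω, h ω)) :=
    entOf_eq_of_inj p _ _ (fun x : β × γ × ε × δ => ((x.1, x.2.1), x.2.2))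
      (fun a b hab => by simp only [Prod.ext_iff] at hab ⊢; tauto) (fun ω => rfl)
  have A5 : entOf p (fun ω => (g ω, Y ω, f ω, h ω))
      = entOf p (fun ω => (f ω, g ω, Y ω, h ω)) :=
    entOf_eq_of_inj p _ _ (fun x : β × γ × ε × δ => (x.2.1, x.2.2.1, x.1, x.2.2.2))
      (fun a b hab => by simp only [Prod.ext_iff] at hab ⊢; tauto) (fun ω => rfl)
  rw [A1, A4, A2, A3, A5]
  ring

/-- Conditioning on extra independent information increases mutual information. -/
theorem condMutInfo_mono (p : Ω → ℝ) (hp : ∀ ω, 0 ≤ p ω)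
    (f : Ω → β) (Y : Ω → ε) (g : Ω → γ) (h : Ω → δ)
    (hindep : condMutInfo p f g h = 0) :
    condMutInfo p f Y h ≤ condMutInfo p f Y (fun ω => (g ω, h ω)) := by
  have hc1 : condMutInfo p (fun ω => (Y ω, g ω)) f h
      = condMutInfo p Y f h + condMutInfo p g f (fun ω => (Y ω, h ω)) :=
    condMutInfo_chain p Y g f h
  have hc2 : condMutInfo p (fun ω => (g ω, Y ω)) f h
      = condMutInfo p g f h + condMutInfo p Y f (fun ω => (g ω, h ω)) :=
    condMutInfo_chain p g Y f h
  have hswap : condMutInfo p (fun ω => (Y ω, g ω)) f h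
      = condMutInfo p (fun ω => (g ω, Y ω)) f h :=
    condMutInfo_first_recode p (fun ω => (g ω, Y ω)) (fun ω => (Y ω, g ω)) f h
      (fun x => (x.2, x.1)) (fun a b hab => by
        simp only [Prod.ext_iff] at hab ⊢; tauto) (fun ω => rfl)
  have hgf : condMutInfo p g f h = condMutInfo p f g h := condMutInfo_symm p g f h
  have hnn : 0 ≤ condMutInfo p g f (fun ω => (Y ω, h ω)) := condMutInfo_nonneg p g f _ hp
  have e1 : condMutInfo p f Y h = condMutInfo p Y f h := condMutInfo_symm p f Y h
  have e2 : condMutInfo p f Y (fun ω => (g ω, h ω))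
      = condMutInfo p Y f (fun ω => (g ω, h ω)) := condMutInfo_symm p f Y _
  rw [e1, e2]
  linarith

end Recode

end GeneralEntropyLemmas

/-- The number `2^{nR}` of messages at blocklength `n` and rate `R` (in bits). -/
def msgSize (n : ℕ) (R : ℝ) : ℕ := max 1 ⌊(2 : ℝ) ^ ((n : ℝ) * R)⌋₊

instance (n : ℕ) (R : ℝ) : NeZero (msgSize n R) :=
  ⟨by have h : 1 ≤ msgSize n R := le_max_left _ _; omega⟩

/-- The `ε`-typical set: `xs` is `ε`-typical for the pmf `p` if the empirical frequency of
every symbol `a` is within `ε · p a` of `p a`. -/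
def Typical {α : Type*} [Fintype α] [DecidableEq α] (p : α → ℝ) (ε : ℝ) {n : ℕ}
    (xs : Fin n → α) : Prop :=
  ∀ a, |((Finset.univ.filter fun i => xs i = a).card : ℝ) / (n : ℝ) - p a| ≤ ε * p a

section SingleLetter

variable {K : ℕ} {Q Yo : Type*} {X : Fin K → Type*}
  [Fintype Q] [DecidableEq Q] [Fintype Yo] [DecidableEq Yo]
  [∀ k, Fintype (X k)] [∀ k, DecidableEq (X k)]

variable (pQ : Q → ℝ) (pX : ∀ k, Q → X k → ℝ) (W : (∀ k, X k) → Yo → ℝ)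

/-- The joint distribution of `(Q, X_{[K]}, Y1)` with
`p(q, x_{[K]}, y1) = p(q) p(x1|q) ⋯ p(xK|q) p(y1 | x_{[K]})`. -/
def SjointP : Q × (∀ k, X k) × Yo → ℝ := fun z =>
  pQ z.1 * (∏ k, pX k z.1 (z.2.1 k)) * W z.2.1 z.2.2

theorem master (hpX : ∀ k q, IsPMF (pX k q)) (hW : ∀ x, IsPMF (W x)) (q0 : Q)
    (χ : ∀ k, X k → ℝ) :
    ∑ z : Q × (∀ k, X k) × Yo,
        (if z.1 = q0 then (∏ k, χ k (z.2.1 k)) * SjointP pQ pX W z else 0)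
      = pQ q0 * ∏ k, (∑ t, χ k t * pX k q0 t) := by
  rw [Fintype.sum_prod_type]
  rw [Finset.sum_eq_single q0]
  rotate_left
  · intro q _ hq
    apply Finset.sum_eq_zero; intro w _
    exact if_neg hq
  · intro hq0; exact absurd (Finset.mem_univ q0) hq0
  simp only [eq_self_iff_true, if_true]
  rw [Fintype.sum_prod_type]
  unfold SjointP
  dsimp only
  have hy : ∀ x : ∀ k, X k, ∑ y, (∏ k, χ k (x k)) * (pQ q0 * (∏ k, pX k q0 (x k)) * W x y)
      = (∏ k, χ k (x k)) * (pQ q0 * (∏ k, pX k q0 (x k))) := by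
    intro x
    rw [← Finset.mul_sum]
    rw [show ∑ y, pQ q0 * (∏ k, pX k q0 (x k)) * W x y
        = pQ q0 * (∏ k, pX k q0 (x k)) * ∑ y, W x y from (Finset.mul_sum _ _ _).symm]
    rw [(hW x).2]
    ring
  simp only [hy]
  have hx : ∀ x : ∀ k, X k, (∏ k, χ k (x k)) * (pQ q0 * (∏ k, pX k q0 (x k)))
      = pQ q0 * ∏ k, (χ k (x k) * pX k q0 (x k)) := by
    intro x
    rw [Finset.prod_mul_distrib]
    ring
  simp only [hx]
  rw [← Finset.mul_sum]
  congr 1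
  rw [Finset.prod_univ_sum]
  rw [Fintype.piFinset_univ]

theorem prodIndicatorX (D : Finset (Fin K)) (v : (k : {k // k ∈ D}) → X k.1) (x : ∀ k, X k) :
    (∏ k, (if h : k ∈ D then (if x k = v ⟨k, h⟩ then (1:ℝ) else 0) else 1))
      = if (fun k : {k // k ∈ D} => x k.1) = v then 1 else 0 := by
  have h1 : (∏ k, (if h : k ∈ D then (if x k = v ⟨k, h⟩ then (1:ℝ) else 0) else 1))
      = ∏ k ∈ D, (if h : k ∈ D then (if x k = v ⟨k, h⟩ then (1:ℝ) else 0) else 1) :=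
    (Finset.prod_subset (Finset.subset_univ D) (fun k _ hk => dif_neg hk)).symm
  rw [h1, ← Finset.prod_attach D
    (fun k => (if h : k ∈ D then (if x k = v ⟨k, h⟩ then (1:ℝ) else 0) else 1))]
  have h2 : ∀ k : {k // k ∈ D},
      (if h : k.1 ∈ D then (if x k.1 = v ⟨k.1, h⟩ then (1:ℝ) else 0) else 1)
        = if x k.1 = v k then 1 else 0 := fun k => dif_pos k.2
  simp only [h2]
  rw [Finset.prod_boole]
  congr 1
  simp only [eq_iff_iff]
  constructor
  · intro hall; funext k; exact hall k (Finset.mem_attach _ _)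
  · intro heq k _; exact congrFun heq k

theorem distOf_eval (hpX : ∀ k q, IsPMF (pX k q)) (hW : ∀ x, IsPMF (W x))
    (D : Finset (Fin K)) (v : (k : {k // k ∈ D}) → X k.1) (q0 : Q) :
    distOf (SjointP pQ pX W) (fun z => ((fun k : {k // k ∈ D} => z.2.1 k.1), z.1)) (v, q0)
      = pQ q0 * ∏ k, (if h : k ∈ D then pX k q0 (v ⟨k, h⟩) else 1) := by
  unfold distOf
  have key : ∀ z : Q × (∀ k, X k) × Yo,
      (if ((fun k : {k // k ∈ D} => z.2.1 k.1), z.1) = (v, q0) then SjointP pQ pX W z else 0)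
        = if z.1 = q0 then
            (∏ k, (if h : k ∈ D then (if z.2.1 k = v ⟨k, h⟩ then (1:ℝ) else 0) else 1))
              * SjointP pQ pX W z else 0 := by
    intro z
    rw [prodIndicatorX]
    by_cases hq : z.1 = q0
    · by_cases hv : (fun k : {k // k ∈ D} => z.2.1 k.1) = v
      · simp [hq, hv]
      · simp [hq, hv, Prod.ext_iff]
    · simp [hq, Prod.ext_iff]
  simp only [key]
  rw [master pQ pX W hpX hW q0 (fun k t => if h : k ∈ D then (if t = v ⟨k, h⟩ then (1:ℝ) else 0) else 1)]
  congr 1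
  apply Finset.prod_congr rfl
  intro k _
  by_cases h : k ∈ D
  · rw [dif_pos h]
    rw [Finset.sum_eq_single (v ⟨k, h⟩)]
    · rw [dif_pos h, if_pos rfl, one_mul]
    · intro t _ ht; rw [dif_pos h, if_neg ht, zero_mul]
    · intro ht; exact absurd (Finset.mem_univ _) ht
  · rw [dif_neg h]
    have : ∀ t : X k, (if h' : k ∈ D then (if t = v ⟨k, h'⟩ then (1:ℝ) else 0) else 1)
        * pX k q0 t = pX k q0 t := fun t => by rw [dif_neg h, one_mul]
    simp only [this]
    exact (hpX k q0).2

/-- Restriction of a tuple indexed by `E` to a tuple indexed by `D ⊆ E`. -/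
def res (D E : Finset (Fin K)) (hDE : D ⊆ E) (u : (k : {k // k ∈ E}) → X k.1) :
    (k : {k // k ∈ D}) → X k.1 := fun k => u ⟨k.1, hDE k.2⟩

/-- Gluing two tuples on a union. -/
def glue2 (A B : Finset (Fin K)) (a : (k : {k // k ∈ A}) → X k.1)
    (b : (k : {k // k ∈ B}) → X k.1) : (k : {k // k ∈ A ∪ B}) → X k.1 :=
  fun k => if h : k.1 ∈ A then a ⟨k.1, h⟩
    else b ⟨k.1, ((Finset.mem_union.mp k.2).resolve_left h)⟩

theorem glue2_left (A B : Finset (Fin K)) (a : (k : {k // k ∈ A}) → X k.1)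
    (b : (k : {k // k ∈ B}) → X k.1) (k : Fin K) (h : k ∈ A) (h' : k ∈ A ∪ B) :
    glue2 A B a b ⟨k, h'⟩ = a ⟨k, h⟩ := dif_pos h

theorem glue2_right (A B : Finset (Fin K)) (hAB : Disjoint A B)
    (a : (k : {k // k ∈ A}) → X k.1) (b : (k : {k // k ∈ B}) → X k.1)
    (k : Fin K) (h : k ∈ B) (h' : k ∈ A ∪ B) :
    glue2 A B a b ⟨k, h'⟩ = b ⟨k, h⟩ :=
  dif_neg (fun hA => Finset.disjoint_left.mp hAB hA h)

theorem SjointP_nonneg (hpQ : IsPMF pQ) (hpX : ∀ k q, IsPMF (pX k q)) (hW : ∀ x, IsPMF (W x)) :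
    ∀ z, 0 ≤ SjointP pQ pX W z := by
  intro z
  exact mul_nonneg (mul_nonneg (hpQ.1 _)
    (Finset.prod_nonneg fun k _ => (hpX k z.1).1 _)) ((hW z.2.1).1 _)

theorem distOf_eval2 (hpX : ∀ k q, IsPMF (pX k q)) (hW : ∀ x, IsPMF (W x))
    (U V : Finset (Fin K)) (hUV : Disjoint U V)
    (u' : (k : {k // k ∈ U}) → X k.1) (v' : (k : {k // k ∈ V}) → X k.1) (q0 : Q) :
    distOf (SjointP pQ pX W)
      (fun z => ((fun k : {k // k ∈ U} => z.2.1 k.1),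
        ((fun k : {k // k ∈ V} => z.2.1 k.1), z.1))) (u', (v', q0))
      = pQ q0 * ∏ k, (if h : k ∈ U ∪ V then pX k q0 (glue2 U V u' v' ⟨k, h⟩) else 1) := by
  set e : (((k : {k // k ∈ U ∪ V}) → X k.1) × Q)
      → ((k : {k // k ∈ U}) → X k.1) × (((k : {k // k ∈ V}) → X k.1) × Q) :=
    fun w => ((fun k => w.1 ⟨k.1, Finset.mem_union_left V k.2⟩),
      ((fun k => w.1 ⟨k.1, Finset.mem_union_right U k.2⟩), w.2)) with he_def
  have he : Function.Injective e := by
    intro x y hxy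
    rw [he_def] at hxy
    simp only [Prod.ext_iff] at hxy
    obtain ⟨h1, h2, h3⟩ := hxy
    refine Prod.ext ?_ h3
    funext k
    rcases Finset.mem_union.mp k.2 with hU | hV
    · exact congrFun h1 ⟨k.1, hU⟩
    · exact congrFun h2 ⟨k.1, hV⟩
  have hpoint : (u', (v', q0)) = e (glue2 U V u' v', q0) := by
    rw [he_def]
    refine Prod.ext ?_ (Prod.ext ?_ rfl) <;> funext k
    · exact (glue2_left U V u' v' k.1 k.2 _).symm
    · exact (glue2_right U V hUV u' v' k.1 k.2 _).symm
  rw [hpoint]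
  have hcp := distOf_comp_point (SjointP pQ pX W)
    (fun z => ((fun k : {k // k ∈ U ∪ V} => z.2.1 k.1), z.1))
    (fun z => ((fun k : {k // k ∈ U} => z.2.1 k.1),
      ((fun k : {k // k ∈ V} => z.2.1 k.1), z.1))) e he (fun z => rfl)
    (glue2 U V u' v', q0)
  exact hcp.trans (distOf_eval pQ pX W hpX hW _ _ _)

theorem distOf_eval3 (hpX : ∀ k q, IsPMF (pX k q)) (hW : ∀ x, IsPMF (W x))
    (A B C : Finset (Fin K)) (hAB : Disjoint A B) (hAC : Disjoint A C) (hBC : Disjoint B C)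
    (a : (k : {k // k ∈ A}) → X k.1) (b : (k : {k // k ∈ B}) → X k.1)
    (c : (k : {k // k ∈ C}) → X k.1) (q0 : Q) :
    distOf (SjointP pQ pX W)
      (fun z => ((fun k : {k // k ∈ A} => z.2.1 k.1),
        ((fun k : {k // k ∈ B} => z.2.1 k.1), ((fun k : {k // k ∈ C} => z.2.1 k.1), z.1))))
      (a, (b, (c, q0)))
      = pQ q0 * ∏ k, (if h : k ∈ A ∪ (B ∪ C) then
          pX k q0 (glue2 A (B ∪ C) a (glue2 B C b c) ⟨k, h⟩) else 1) := by
  have hABC : Disjoint A (B ∪ C) := Finset.disjoint_union_right.mpr ⟨hAB, hAC⟩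
  set e : (((k : {k // k ∈ A ∪ (B ∪ C)}) → X k.1) × Q)
      → ((k : {k // k ∈ A}) → X k.1) × (((k : {k // k ∈ B}) → X k.1)
        × (((k : {k // k ∈ C}) → X k.1) × Q)) :=
    fun w => ((fun k => w.1 ⟨k.1, Finset.mem_union_left _ k.2⟩),
      ((fun k => w.1 ⟨k.1, Finset.mem_union_right _ (Finset.mem_union_left _ k.2)⟩),
        ((fun k => w.1 ⟨k.1, Finset.mem_union_right _ (Finset.mem_union_right _ k.2)⟩), w.2)))
      with he_def
  have he : Function.Injective e := by
    intro x y hxy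
    rw [he_def] at hxy
    simp only [Prod.ext_iff] at hxy
    obtain ⟨h1, h2, h3, h4⟩ := hxy
    refine Prod.ext ?_ h4
    funext k
    rcases Finset.mem_union.mp k.2 with hA | hBC'
    · exact congrFun h1 ⟨k.1, hA⟩
    · rcases Finset.mem_union.mp hBC' with hB | hC
      · exact congrFun h2 ⟨k.1, hB⟩
      · exact congrFun h3 ⟨k.1, hC⟩
  have hpoint : (a, (b, (c, q0))) = e (glue2 A (B ∪ C) a (glue2 B C b c), q0) := by
    rw [he_def]
    refine Prod.ext ?_ (Prod.ext ?_ (Prod.ext ?_ rfl)) <;> funext k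
    · exact (glue2_left A (B ∪ C) a _ k.1 k.2 _).symm
    · exact ((glue2_right A (B ∪ C) hABC a (glue2 B C b c) k.1
        (Finset.mem_union_left _ k.2)
        (Finset.mem_union_right _ (Finset.mem_union_left _ k.2))).trans
        (glue2_left B C b c k.1 k.2 (Finset.mem_union_left _ k.2))).symm
    · exact ((glue2_right A (B ∪ C) hABC a (glue2 B C b c) k.1
        (Finset.mem_union_right _ k.2)
        (Finset.mem_union_right _ (Finset.mem_union_right _ k.2))).trans
        (glue2_right B C hBC b c k.1 k.2 (Finset.mem_union_right _ k.2))).symm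
  rw [hpoint]
  have hcp := distOf_comp_point (SjointP pQ pX W)
    (fun z => ((fun k : {k // k ∈ A ∪ (B ∪ C)} => z.2.1 k.1), z.1))
    (fun z => ((fun k : {k // k ∈ A} => z.2.1 k.1),
      ((fun k : {k // k ∈ B} => z.2.1 k.1), ((fun k : {k // k ∈ C} => z.2.1 k.1), z.1))))
    e he (fun z => rfl) (glue2 A (B ∪ C) a (glue2 B C b c), q0)
  exact hcp.trans (distOf_eval pQ pX W hpX hW _ _ _)

theorem condMutInfo_indep (hpQ : IsPMF pQ) (hpX : ∀ k q, IsPMF (pX k q))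
    (hW : ∀ x, IsPMF (W x)) (A B C : Finset (Fin K))
    (hAB : Disjoint A B) (hAC : Disjoint A C) (hBC : Disjoint B C) :
    condMutInfo (SjointP pQ pX W)
      (fun z => fun k : {k // k ∈ A} => z.2.1 k.1)
      (fun z => fun k : {k // k ∈ B} => z.2.1 k.1)
      (fun z => ((fun k : {k // k ∈ C} => z.2.1 k.1), z.1)) = 0 := by
  refine condMutInfo_eq_zero_of_indep _ _ _ _ (SjointP_nonneg pQ pX W hpQ hpX hW) ?_
  intro a b cd
  obtain ⟨c, q0⟩ := cd
  have e3 := distOf_eval3 pQ pX W hpX hW A B C hAB hAC hBC a b c q0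
  have e0 := distOf_eval pQ pX W hpX hW C c q0
  have eAC := distOf_eval2 pQ pX W hpX hW A C hAC a c q0
  have eBC := distOf_eval2 pQ pX W hpX hW B C hBC b c q0
  rw [e3, e0, eAC, eBC]
  have hprod : (∏ k, (if h : k ∈ A ∪ (B ∪ C) then
        pX k q0 (glue2 A (B ∪ C) a (glue2 B C b c) ⟨k, h⟩) else 1))
      * (∏ k, (if h : k ∈ C then pX k q0 (c ⟨k, h⟩) else 1))
      = (∏ k, (if h : k ∈ A ∪ C then pX k q0 (glue2 A C a c ⟨k, h⟩) else 1))
      * (∏ k, (if h : k ∈ B ∪ C then pX k q0 (glue2 B C b c ⟨k, h⟩) else 1)) := by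
    rw [← Finset.prod_mul_distrib, ← Finset.prod_mul_distrib]
    apply Finset.prod_congr rfl
    intro k _
    by_cases hA : k ∈ A
    · have hB : k ∉ B := Finset.disjoint_left.mp hAB hA
      have hC : k ∉ C := Finset.disjoint_left.mp hAC hA
      simp [glue2, hA, hB, hC, mul_comm]
    · by_cases hB : k ∈ B
      · have hC : k ∉ C := Finset.disjoint_left.mp hBC hB
        simp [glue2, hA, hB, hC, mul_comm]
      · by_cases hC : k ∈ C
        · simp [glue2, hA, hB, hC]
        · simp [glue2, hA, hB, hC, mul_comm]
  calc (pQ q0 * ∏ k, (if h : k ∈ A ∪ (B ∪ C) then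
          pX k q0 (glue2 A (B ∪ C) a (glue2 B C b c) ⟨k, h⟩) else 1))
        * (pQ q0 * ∏ k, (if h : k ∈ C then pX k q0 (c ⟨k, h⟩) else 1))
      = pQ q0 * pQ q0 * ((∏ k, (if h : k ∈ A ∪ (B ∪ C) then
          pX k q0 (glue2 A (B ∪ C) a (glue2 B C b c) ⟨k, h⟩) else 1))
        * (∏ k, (if h : k ∈ C then pX k q0 (c ⟨k, h⟩) else 1))) := by ring
    _ = pQ q0 * pQ q0 * ((∏ k, (if h : k ∈ A ∪ C then pX k q0 (glue2 A C a c ⟨k, h⟩) else 1))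
        * (∏ k, (if h : k ∈ B ∪ C then pX k q0 (glue2 B C b c ⟨k, h⟩) else 1))) := by
          rw [hprod]
    _ = _ := by ring

/-- The random variable `X_M` on the joint space. -/
def XV (M : Finset (Fin K)) : Q × (∀ k, X k) × Yo → ((k : {k // k ∈ M}) → X k.1) :=
  fun z => fun k => z.2.1 k.1

theorem split_inj_pair (U V D : Finset (Fin K)) (hU : U ⊆ D) (hV : V ⊆ D) (hD : D ⊆ U ∪ V) :
    Function.Injective (fun u : ((k : {k // k ∈ D}) → X k.1) =>
      ((fun k : {k // k ∈ U} => u ⟨k.1, hU k.2⟩), (fun k : {k // k ∈ V} => u ⟨k.1, hV k.2⟩))) := by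
  intro x y hxy
  simp only [Prod.ext_iff] at hxy
  obtain ⟨h1, h2⟩ := hxy
  funext k
  rcases Finset.mem_union.mp (hD k.2) with hU' | hV'
  · exact congrFun h1 ⟨k.1, hU'⟩
  · exact congrFun h2 ⟨k.1, hV'⟩

theorem split_inj_pairQ (U V D : Finset (Fin K)) (hU : U ⊆ D) (hV : V ⊆ D) (hD : D ⊆ U ∪ V) :
    Function.Injective (fun w : (((k : {k // k ∈ D}) → X k.1) × Q) =>
      ((fun k : {k // k ∈ U} => w.1 ⟨k.1, hU k.2⟩),
        ((fun k : {k // k ∈ V} => w.1 ⟨k.1, hV k.2⟩), w.2))) := by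
  intro x y hxy
  simp only [Prod.ext_iff] at hxy
  obtain ⟨h1, h2, h3⟩ := hxy
  refine Prod.ext ?_ h3
  funext k
  rcases Finset.mem_union.mp (hD k.2) with hU' | hV'
  · exact congrFun h1 ⟨k.1, hU'⟩
  · exact congrFun h2 ⟨k.1, hV'⟩

/-- A set `S ⊆ [K]` is *decodable* if `R_T ≤ I(X_T; Y1 | X_{S \ T}, Q)` for all `T ⊆ S`. -/
def IsDecodableSet (R : Fin K → ℝ) (S : Finset (Fin K)) : Prop :=
  ∀ T ⊆ S, ∑ k ∈ T, R k ≤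
    condMutInfo (SjointP pQ pX W)
      (fun z => fun k : {k // k ∈ T} => z.2.1 k.1)
      (fun z => z.2.2)
      (fun z => ((fun k : {k // k ∈ S \ T} => z.2.1 k.1), z.1))

/-- **Proposition 1.** If `S1` and `S2` are decodable sets, then `S1 ∪ S2` is decodable. -/
theorem union_of_decodable_sets
    (hpQ : IsPMF pQ) (hpX : ∀ k q, IsPMF (pX k q)) (hW : ∀ x, IsPMF (W x))
    (R : Fin K → ℝ) (hR : ∀ k, 0 ≤ R k) (S1 S2 : Finset (Fin K))
    (h1 : IsDecodableSet pQ pX W R S1) (h2 : IsDecodableSet pQ pX W R S2) :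
    IsDecodableSet pQ pX W R (S1 ∪ S2) := by
  intro T hT
  classical
  set P := SjointP pQ pX W with hPdef
  have hp : ∀ z, 0 ≤ P z := SjointP_nonneg pQ pX W hpQ hpX hW
  set Y : Q × (∀ k, X k) × Yo → Yo := fun z => z.2.2 with hYdef
  set S : Finset (Fin K) := S1 ∪ S2 with hSdef
  set T1 : Finset (Fin K) := T ∩ S1 with hT1def
  set T2 : Finset (Fin K) := T \ S1 with hT2def
  set C1 : Finset (Fin K) := S1 \ T1 with hC1def
  set D1 : Finset (Fin K) := (S \ T) \ C1 with hD1def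
  set C2 : Finset (Fin K) := S2 \ T2 with hC2def
  set E : Finset (Fin K) := T1 ∪ (S \ T) with hEdef
  set D2 : Finset (Fin K) := E \ C2 with hD2def
  -- subset facts
  have hT1S1 : T1 ⊆ S1 := Finset.inter_subset_right
  have hT1T : T1 ⊆ T := Finset.inter_subset_left
  have hT2T : T2 ⊆ T := Finset.sdiff_subset
  have hT2S2 : T2 ⊆ S2 := by
    intro k hk
    rw [hT2def, Finset.mem_sdiff] at hk
    rcases Finset.mem_union.mp (hT hk.1) with h | h
    · exact absurd h hk.2
    · exact h
  have hTsub : T ⊆ T1 ∪ T2 := by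
    intro k hk
    by_cases h : k ∈ S1
    · exact Finset.mem_union_left _ (Finset.mem_inter.mpr ⟨hk, h⟩)
    · exact Finset.mem_union_right _ (Finset.mem_sdiff.mpr ⟨hk, h⟩)
  have hC1ST : C1 ⊆ S \ T := by
    intro k hk
    rw [hC1def, Finset.mem_sdiff] at hk
    refine Finset.mem_sdiff.mpr ⟨Finset.mem_union_left _ hk.1, fun hkT => ?_⟩
    exact hk.2 (Finset.mem_inter.mpr ⟨hkT, hk.1⟩)
  have hSTsub : S \ T ⊆ D1 ∪ C1 := by
    intro k hk
    by_cases h : k ∈ C1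
    · exact Finset.mem_union_right _ h
    · exact Finset.mem_union_left _ (Finset.mem_sdiff.mpr ⟨hk, h⟩)
  have hC2E : C2 ⊆ E := by
    intro k hk
    rw [hC2def, Finset.mem_sdiff] at hk
    by_cases h : k ∈ T
    · refine Finset.mem_union_left _ (Finset.mem_inter.mpr ⟨h, ?_⟩)
      by_contra hk1
      exact hk.2 (Finset.mem_sdiff.mpr ⟨h, hk1⟩)
    · exact Finset.mem_union_right _
        (Finset.mem_sdiff.mpr ⟨Finset.mem_union_right _ hk.1, h⟩)
  have hEsub : E ⊆ D2 ∪ C2 := by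
    intro k hk
    by_cases h : k ∈ C2
    · exact Finset.mem_union_right _ h
    · exact Finset.mem_union_left _ (Finset.mem_sdiff.mpr ⟨hk, h⟩)
  -- disjointness facts
  have dT1C1 : Disjoint T1 C1 := Finset.disjoint_sdiff
  have dD1C1 : Disjoint D1 C1 := Finset.sdiff_disjoint
  have dT1D1 : Disjoint T1 D1 := by
    rw [Finset.disjoint_left]
    intro k hk hk'
    have : k ∈ S \ T := Finset.sdiff_subset hk'
    exact absurd (hT1T hk) (Finset.mem_sdiff.mp this).2
  have dT2C2 : Disjoint T2 C2 := Finset.disjoint_sdiff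
  have dD2C2 : Disjoint D2 C2 := Finset.sdiff_disjoint
  have dT2D2 : Disjoint T2 D2 := by
    rw [Finset.disjoint_left]
    intro k hk hk'
    have hkE : k ∈ E := Finset.sdiff_subset hk'
    rw [hT2def, Finset.mem_sdiff] at hk
    rcases Finset.mem_union.mp hkE with h | h
    · exact hk.2 (hT1S1 h)
    · exact (Finset.mem_sdiff.mp h).2 hk.1
  have h1'' : ∑ k ∈ T1, R k ≤ condMutInfo P (XV T1) Y (fun z => (XV C1 z, z.1)) :=
    h1 T1 hT1S1
  have h2'' : ∑ k ∈ T2, R k ≤ condMutInfo P (XV T2) Y (fun z => (XV C2 z, z.1)) :=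
    h2 T2 hT2S2
  have step1 : condMutInfo P (XV T) Y (fun z => (XV (S \ T) z, z.1))
      = condMutInfo P (fun z => (XV T1 z, XV T2 z)) Y (fun z => (XV (S \ T) z, z.1)) :=
    (condMutInfo_first_recode P (XV T) (fun z => (XV T1 z, XV T2 z)) Y _
      (fun u => ((fun k : {k // k ∈ T1} => u ⟨k.1, hT1T k.2⟩),
        (fun k : {k // k ∈ T2} => u ⟨k.1, hT2T k.2⟩)))
      (split_inj_pair T1 T2 T hT1T hT2T hTsub) (fun z => rfl)).symm
  have step2 : condMutInfo P (fun z => (XV T1 z, XV T2 z)) Y (fun z => (XV (S \ T) z, z.1))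
      = condMutInfo P (XV T1) Y (fun z => (XV (S \ T) z, z.1))
        + condMutInfo P (XV T2) Y (fun z => (XV T1 z, (XV (S \ T) z, z.1))) :=
    condMutInfo_chain P (XV T1) (XV T2) Y (fun z => (XV (S \ T) z, z.1))
  have r1 : condMutInfo P (XV T1) Y (fun z => (XV D1 z, (XV C1 z, z.1)))
      = condMutInfo P (XV T1) Y (fun z => (XV (S \ T) z, z.1)) :=
    condMutInfo_third_recode P (XV T1) Y (fun z => (XV (S \ T) z, z.1)) _
      (fun w : (((k : {k // k ∈ S \ T}) → X k.1) × Q) =>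
        ((fun k : {k // k ∈ D1} => w.1 ⟨k.1, Finset.sdiff_subset k.2⟩),
          ((fun k : {k // k ∈ C1} => w.1 ⟨k.1, hC1ST k.2⟩), w.2)))
      (split_inj_pairQ D1 C1 (S \ T) Finset.sdiff_subset hC1ST hSTsub) (fun z => rfl)
  have ind1 : condMutInfo P (XV T1) (XV D1) (fun z => (XV C1 z, z.1)) = 0 :=
    condMutInfo_indep pQ pX W hpQ hpX hW T1 D1 C1 dT1D1 dT1C1 dD1C1
  have mono1 : condMutInfo P (XV T1) Y (fun z => (XV C1 z, z.1))
      ≤ condMutInfo P (XV T1) Y (fun z => (XV D1 z, (XV C1 z, z.1))) :=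
    condMutInfo_mono P hp (XV T1) Y (XV D1) (fun z => (XV C1 z, z.1)) ind1
  have rE : condMutInfo P (XV T2) Y (fun z => (XV T1 z, (XV (S \ T) z, z.1)))
      = condMutInfo P (XV T2) Y (fun z => (XV E z, z.1)) :=
    condMutInfo_third_recode P (XV T2) Y (fun z => (XV E z, z.1)) _
      (fun w : (((k : {k // k ∈ E}) → X k.1) × Q) =>
        ((fun k : {k // k ∈ T1} => w.1 ⟨k.1, Finset.subset_union_left k.2⟩),
          ((fun k : {k // k ∈ S \ T} => w.1 ⟨k.1, Finset.subset_union_right k.2⟩), w.2)))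
      (split_inj_pairQ T1 (S \ T) E Finset.subset_union_left Finset.subset_union_right
        (Finset.Subset.refl E)) (fun z => rfl)
  have rE2 : condMutInfo P (XV T2) Y (fun z => (XV D2 z, (XV C2 z, z.1)))
      = condMutInfo P (XV T2) Y (fun z => (XV E z, z.1)) :=
    condMutInfo_third_recode P (XV T2) Y (fun z => (XV E z, z.1)) _
      (fun w : (((k : {k // k ∈ E}) → X k.1) × Q) =>
        ((fun k : {k // k ∈ D2} => w.1 ⟨k.1, Finset.sdiff_subset k.2⟩),
          ((fun k : {k // k ∈ C2} => w.1 ⟨k.1, hC2E k.2⟩), w.2)))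
      (split_inj_pairQ D2 C2 E Finset.sdiff_subset hC2E hEsub) (fun z => rfl)
  have ind2 : condMutInfo P (XV T2) (XV D2) (fun z => (XV C2 z, z.1)) = 0 :=
    condMutInfo_indep pQ pX W hpQ hpX hW T2 D2 C2 dT2D2 dT2C2 dD2C2
  have mono2 : condMutInfo P (XV T2) Y (fun z => (XV C2 z, z.1))
      ≤ condMutInfo P (XV T2) Y (fun z => (XV D2 z, (XV C2 z, z.1))) :=
    condMutInfo_mono P hp (XV T2) Y (XV D2) (fun z => (XV C2 z, z.1)) ind2
  have hRsum : ∑ k ∈ T, R k = ∑ k ∈ T1, R k + ∑ k ∈ T2, R k :=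
    (Finset.sum_inter_add_sum_sdiff T S1 R).symm
  show ∑ k ∈ T, R k ≤ condMutInfo P (XV T) Y (fun z => (XV (S \ T) z, z.1))
  linarith


end SingleLetter
end
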